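/- Let S₁ and S₂ be subsets of S^{n-1} invariant under the subgroup of O(n) stabilizing a point e, and suppose inf{x·y : x ∈ S₁, y ∈ S₂} is attained at p₁ ∈ S₁, p₂ ∈ S₂ with p₁, p₂ ∉ {e, -e}. Then e, p₁, p₂ lie on a common 2-dimensional linear subspace, and if f is a unit vector in that subspace orthogonal to e, then (f·p₁)(f·p₂) < 0. -/

import Mathlib

open scoped RealInnerProductSpace

theorem stabilizer_invariant_min_inner (n : ℕ)
    (e : EuclideanSpace ℝ (Fin n)) (he : ‖e‖ = 1)
    (S₁ S₂ : Set (EuclideanSpace ℝ (Fin n)))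
    (hS₁ : ∀ x ∈ S₁, ‖x‖ = 1) (hS₂ : ∀ y ∈ S₂, ‖y‖ = 1)
    (hinv₁ : ∀ T : EuclideanSpace ℝ (Fin n) ≃ₗᵢ[ℝ] EuclideanSpace ℝ (Fin n),
      T e = e → T '' S₁ = S₁)
    (hinv₂ : ∀ T : EuclideanSpace ℝ (Fin n) ≃ₗᵢ[ℝ] EuclideanSpace ℝ (Fin n),
      T e = e → T '' S₂ = S₂)
    (p₁ p₂ : EuclideanSpace ℝ (Fin n)) (hp₁ : p₁ ∈ S₁) (hp₂ : p₂ ∈ S₂)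
    (hmin : ∀ x ∈ S₁, ∀ y ∈ S₂, ⟪p₁, p₂⟫ ≤ ⟪x, y⟫)
    (hp₁e : p₁ ≠ e ∧ p₁ ≠ -e) (hp₂e : p₂ ≠ e ∧ p₂ ≠ -e) :
    ∃ W : Submodule ℝ (EuclideanSpace ℝ (Fin n)),
      Module.finrank ℝ W = 2 ∧ e ∈ W ∧ p₁ ∈ W ∧ p₂ ∈ W ∧
      ∀ f ∈ W, ‖f‖ = 1 → ⟪f, e⟫ = 0 → ⟪f, p₁⟫ * ⟪f, p₂⟫ < 0 := by
  have hee : ⟪e, e⟫ = (1 : ℝ) := by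
    rw [real_inner_self_eq_norm_sq, he]; norm_num
  set c₁ : ℝ := ⟪e, p₁⟫ with hc₁
  set c₂ : ℝ := ⟪e, p₂⟫ with hc₂
  set q₁ : EuclideanSpace ℝ (Fin n) := p₁ - c₁ • e with hq₁def
  set q₂ : EuclideanSpace ℝ (Fin n) := p₂ - c₂ • e with hq₂def
  have heq₁ : ⟪e, q₁⟫ = 0 := by
    simp [hq₁def, inner_sub_right, inner_smul_right, hee, hc₁, he]
  have heq₂ : ⟪e, q₂⟫ = 0 := by
    simp [hq₂def, inner_sub_right, inner_smul_right, hee, hc₂, he]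
  have hq₁e : ⟪q₁, e⟫ = 0 := by rw [real_inner_comm]; exact heq₁
  have hq₂e : ⟪q₂, e⟫ = 0 := by rw [real_inner_comm]; exact heq₂
  -- nonvanishing of the orthogonal components
  have hq_ne : ∀ p : EuclideanSpace ℝ (Fin n), ‖p‖ = 1 → p ≠ e → p ≠ -e →
      p - ⟪e, p⟫ • e ≠ 0 := by
    intro p hp h1 h2 h0
    have hp_eq : p = ⟪e, p⟫ • e := by rwa [sub_eq_zero] at h0
    have habs : |⟪e, p⟫| = 1 := by
      have := congrArg norm hp_eq
      rw [norm_smul, he, mul_one, hp] at this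
      simpa using this.symm
    rcases abs_eq (by norm_num : (0:ℝ) ≤ 1) |>.mp habs with h | h
    · rw [h, one_smul] at hp_eq; exact h1 hp_eq
    · rw [h, neg_one_smul] at hp_eq; exact h2 hp_eq
  have hq₁ne : q₁ ≠ 0 := hq_ne p₁ (hS₁ p₁ hp₁) hp₁e.1 hp₁e.2
  have hq₂ne : q₂ ≠ 0 := hq_ne p₂ (hS₂ p₂ hp₂) hp₂e.1 hp₂e.2
  have hnq₁ : (0:ℝ) < ‖q₁‖ := norm_pos_iff.mpr hq₁ne
  have hnq₂ : (0:ℝ) < ‖q₂‖ := norm_pos_iff.mpr hq₂ne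
  have hp₁eq : p₁ = c₁ • e + q₁ := by simp [hq₁def]
  have hp₂eq : p₂ = c₂ • e + q₂ := by simp [hq₂def]
  -- the reflection sending q₂ to b := -(‖q₂‖/‖q₁‖) • q₁
  set b : EuclideanSpace ℝ (Fin n) := (-(‖q₂‖ / ‖q₁‖)) • q₁ with hbdef
  have hbnorm : ‖q₂‖ = ‖b‖ := by
    rw [hbdef, norm_smul, Real.norm_eq_abs, abs_neg, abs_div,
      abs_of_pos hnq₂, abs_of_pos hnq₁]
    field_simp
  set T : EuclideanSpace ℝ (Fin n) ≃ₗᵢ[ℝ] EuclideanSpace ℝ (Fin n) :=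
    Submodule.reflection (ℝ ∙ (q₂ - b))ᗮ with hTdef
  have hTe : T e = e := by
    apply Submodule.reflection_mem_subspace_eq_self
    rw [Submodule.mem_orthogonal_singleton_iff_inner_right]
    rw [inner_sub_left, hq₂e, hbdef, inner_smul_left, hq₁e]
    simp
  have hTq₂ : T q₂ = b := Submodule.reflection_sub hbnorm
  have hTp₂ : T p₂ = c₂ • e + b := by
    rw [hp₂eq, map_add, LinearIsometryEquiv.map_smul, hTe, hTq₂]
  have hTp₂S : T p₂ ∈ S₂ := by
    rw [← hinv₂ T hTe]; exact ⟨p₂, hp₂, rfl⟩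
  -- the minimality gives equality in Cauchy–Schwarz
  have hinner_p : ⟪p₁, p₂⟫ = c₁ * c₂ + ⟪q₁, q₂⟫ := by
    rw [hp₁eq, hp₂eq]
    simp only [inner_add_left, inner_add_right, real_inner_smul_left,
      real_inner_smul_right, hee, heq₁, heq₂, hq₁e, hq₂e]
    ring
  have hinner_Tp : ⟪p₁, T p₂⟫ = c₁ * c₂ - ‖q₁‖ * ‖q₂‖ := by
    rw [hp₁eq, hTp₂, hbdef]
    simp only [inner_add_left, inner_add_right, real_inner_smul_left,
      real_inner_smul_right, hee, heq₁, hq₁e, real_inner_self_eq_norm_sq]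
    field_simp
    ring
  have hle : ⟪q₁, q₂⟫ ≤ -(‖q₁‖ * ‖q₂‖) := by
    have := hmin p₁ hp₁ (T p₂) hTp₂S
    rw [hinner_p, hinner_Tp] at this
    linarith
  have hge : -(‖q₁‖ * ‖q₂‖) ≤ ⟪q₁, q₂⟫ := by
    have := abs_real_inner_le_norm q₁ q₂
    cases abs_le.mp this with
    | intro h1 h2 => linarith
  have heqCS : ⟪-q₁, q₂⟫ = ‖-q₁‖ * ‖q₂‖ := by
    rw [inner_neg_left, norm_neg]
    linarith
  have hq₂b : q₂ = b := by
    have h := inner_eq_norm_mul_iff_real.mp heqCS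
    rw [norm_neg] at h
    have h2 : ‖q₂‖ • (-q₁) = ‖q₁‖ • q₂ := h
    have h3 := congrArg (fun z => (‖q₁‖)⁻¹ • z) h2
    simp only [inv_smul_smul₀ (ne_of_gt hnq₁)] at h3
    rw [hbdef, neg_smul, ← smul_neg, div_eq_inv_mul, ← smul_smul]
    exact h3.symm
  -- the plane
  refine ⟨Submodule.span ℝ {e, q₁}, ?_, ?_, ?_, ?_, ?_⟩
  · have hli : LinearIndependent ℝ ![e, q₁] := by
      rw [LinearIndependent.pair_iff]
      intro s t hst
      have h1 : ⟪e, s • e + t • q₁⟫ = s := by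
        rw [inner_add_right, real_inner_smul_right, real_inner_smul_right, hee, heq₁]; ring
      rw [hst, inner_zero_right] at h1
      have hs : s = 0 := h1.symm
      rw [hs, zero_smul, zero_add] at hst
      have ht : t = 0 := by
        rcases smul_eq_zero.mp hst with h | h
        · exact h
        · exact absurd h hq₁ne
      exact ⟨hs, ht⟩
    have := finrank_span_eq_card (R := ℝ) hli
    have hr : Set.range ![e, q₁] = {e, q₁} := by
      ext x
      simp only [Matrix.range_cons, Matrix.range_empty, Set.union_empty,
        Set.union_singleton, Set.mem_insert_iff, Set.mem_singleton_iff]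
      tauto
    rw [hr] at this
    simpa using this
  · exact Submodule.subset_span (by simp)
  · rw [hp₁eq]
    exact Submodule.add_mem _
      (Submodule.smul_mem _ _ (Submodule.subset_span (by simp)))
      (Submodule.subset_span (by simp))
  · rw [hp₂eq, hq₂b, hbdef]
    exact Submodule.add_mem _
      (Submodule.smul_mem _ _ (Submodule.subset_span (by simp)))
      (Submodule.smul_mem _ _ (Submodule.subset_span (by simp)))
  · intro f hf hfnorm hfe
    rcases Submodule.mem_span_pair.mp hf with ⟨s, t, hst⟩
    have hs : s = 0 := by
      have : ⟪s • e + t • q₁, e⟫ = s := by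
        rw [inner_add_left, real_inner_smul_left, real_inner_smul_left, hee, hq₁e]; ring
      rw [hst, hfe] at this
      exact this.symm
    rw [hs, zero_smul, zero_add] at hst
    have ht : t ≠ 0 := by
      rintro rfl
      rw [zero_smul] at hst
      rw [← hst] at hfnorm
      simp at hfnorm
    have hfp₁ : ⟪f, p₁⟫ = t * ‖q₁‖ ^ 2 := by
      rw [← hst, hp₁eq]
      simp only [inner_add_right, real_inner_smul_left, real_inner_smul_right,
        hq₁e, real_inner_self_eq_norm_sq]
      ring
    have hfp₂ : ⟪f, p₂⟫ = t * (-(‖q₁‖ * ‖q₂‖)) := by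
      have hq : ⟪q₁, q₂⟫ = -(‖q₁‖ * ‖q₂‖) := le_antisymm hle hge
      rw [← hst, hp₂eq]
      simp only [inner_add_right, real_inner_smul_left, real_inner_smul_right,
        hq₁e, hq]
      ring
    rw [hfp₁, hfp₂]
    have ht2 : (0:ℝ) < t ^ 2 := by positivity
    have hrw : t * ‖q₁‖ ^ 2 * (t * -(‖q₁‖ * ‖q₂‖)) = -(t ^ 2 * ‖q₁‖ ^ 3 * ‖q₂‖) := by
      ring
    rw [hrw, neg_lt_zero]
    exact mul_pos (mul_pos ht2 (pow_pos hnq₁ 3)) hnq₂
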